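/- Let Q* be a fixed point of the Bellman operator F, let π* be a greedy policy with respect to Q* (i.e., Q*(s,π*(s)) = max_{a∈A} Q*(s,a) for all s), let ε > 0 satisfy γ + ε < 1, and let M = Σ_{k=0}^∞ (γ+ε)^{−2k} (A_{π*}ᵏ)ᵀ A_{π*}ᵏ. Then for every Q ∈ ℝ^{S×A} with Q ≤ Q* entrywise, the weighted Euclidean norm ‖x‖_M = √(xᵀ M x) satisfies ‖F Q − Q*‖_M ≤ (γ+ε) ‖Q − Q*‖_M. -/

import Mathlib

open Finset Matrix

/-- The Bellman operator `F` for a discounted MDP: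
`(F Q)(s,a) = R(s,a) + γ * Σ_{s'} P(s'|s,a) * max_{a'} Q(s',a')`. -/
noncomputable def bellman {S A : Type*} [Fintype S] [Fintype A] [Nonempty A]
    (γ : ℝ) (P : S → A → S → ℝ) (R : S → A → ℝ) (Q : S × A → ℝ) : S × A → ℝ :=
  fun p =>
    R p.1 p.2 +
      γ * ∑ s' : S, P p.1 p.2 s' * Finset.univ.sup' Finset.univ_nonempty (fun a' => Q (s', a'))

/-- The matrix of the linear map `A_π` on `ℝ^{S×A}` associated with a deterministic
policy `π : S → A`: `(A_π x)(s,a) = γ * Σ_{s'} P(s'|s,a) * x(s', π(s'))`.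
Its entry at row `(s,a)`, column `(s',a')` is `γ * P(s'|s,a)` if `a' = π s'`, else `0`. -/
noncomputable def polMat {S A : Type*} [Fintype S] [Fintype A] [DecidableEq A]
    (γ : ℝ) (P : S → A → S → ℝ) (π : S → A) : Matrix (S × A) (S × A) ℝ :=
  Matrix.of fun p q => if q.2 = π q.1 then γ * P p.1 p.2 q.1 else 0

section Aux

set_option linter.unusedSectionVars false

variable {S A : Type*} [Fintype S] [Fintype A] [DecidableEq S] [DecidableEq A]

lemma polMat_nonneg {γ : ℝ} (hγ0 : 0 ≤ γ) {P : S → A → S → ℝ}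
    (hP0 : ∀ s a s', 0 ≤ P s a s') (π : S → A) (p q : S × A) :
    0 ≤ polMat γ P π p q := by
  simp only [polMat, Matrix.of_apply]
  split
  · exact mul_nonneg hγ0 (hP0 _ _ _)
  · exact le_refl 0

lemma polMat_row {γ : ℝ} {P : S → A → S → ℝ} (hP1 : ∀ s a, ∑ s' : S, P s a s' = 1)
    (π : S → A) (p : S × A) : ∑ q : S × A, polMat γ P π p q = γ := by
  rw [Fintype.sum_prod_type]
  simp only [polMat, Matrix.of_apply]
  have : ∀ s' : S, (∑ a' : A, if a' = π s' then γ * P p.1 p.2 s' else 0) = γ * P p.1 p.2 s' := by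
    intro s'
    rw [Finset.sum_ite_eq' Finset.univ (π s') (fun _ => γ * P p.1 p.2 s')]
    simp
  rw [Finset.sum_congr rfl fun s' _ => this s', ← Finset.mul_sum, hP1]
  ring

lemma pow_nonneg_entries {γ : ℝ} (hγ0 : 0 ≤ γ) {P : S → A → S → ℝ}
    (hP0 : ∀ s a s', 0 ≤ P s a s') (π : S → A) (k : ℕ) (p q : S × A) :
    0 ≤ (polMat γ P π ^ k) p q := by
  induction k generalizing p q with
  | zero => simp [Matrix.one_apply]; split <;> norm_num
  | succ n ih =>
    rw [pow_succ, Matrix.mul_apply]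
    exact Finset.sum_nonneg fun r _ => mul_nonneg (ih p r) (polMat_nonneg hγ0 hP0 π r q)

lemma pow_row {γ : ℝ} {P : S → A → S → ℝ} (hP1 : ∀ s a, ∑ s' : S, P s a s' = 1)
    (π : S → A) (k : ℕ) (p : S × A) : ∑ q : S × A, (polMat γ P π ^ k) p q = γ ^ k := by
  induction k generalizing p with
  | zero => simp [Matrix.one_apply, Finset.sum_ite_eq]
  | succ n ih =>
    rw [pow_succ]
    simp only [Matrix.mul_apply]
    rw [Finset.sum_comm]
    calc ∑ r : S × A, ∑ q : S × A, (polMat γ P π ^ n) p r * polMat γ P π r q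
        = ∑ r : S × A, (polMat γ P π ^ n) p r * γ := by
          refine Finset.sum_congr rfl fun r _ => ?_
          rw [← Finset.mul_sum, polMat_row hP1]
      _ = γ ^ (n + 1) := by rw [← Finset.sum_mul, ih, pow_succ]

lemma pow_entry_le {γ : ℝ} (hγ0 : 0 ≤ γ) {P : S → A → S → ℝ}
    (hP0 : ∀ s a s', 0 ≤ P s a s') (hP1 : ∀ s a, ∑ s' : S, P s a s' = 1)
    (π : S → A) (k : ℕ) (p q : S × A) : (polMat γ P π ^ k) p q ≤ γ ^ k := by
  rw [← pow_row hP1 π k p]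
  exact Finset.single_le_sum (fun r _ => pow_nonneg_entries hγ0 hP0 π k p r) (Finset.mem_univ q)

end Aux

theorem stmt13 {S A : Type*} [Fintype S] [Fintype A] [Nonempty S] [Nonempty A]
    [DecidableEq S] [DecidableEq A]
    (γ ε : ℝ) (hγ0 : 0 ≤ γ) (hγ1 : γ < 1) (hε : 0 < ε) (hγε : γ + ε < 1)
    (P : S → A → S → ℝ) (hP0 : ∀ s a s', 0 ≤ P s a s')
    (hP1 : ∀ s a, ∑ s' : S, P s a s' = 1)
    (R : S → A → ℝ)
    (Qstar : S × A → ℝ) (hfix : bellman γ P R Qstar = Qstar)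
    (πstar : S → A)
    (hgreedy : ∀ s : S,
      Qstar (s, πstar s) = Finset.univ.sup' Finset.univ_nonempty (fun a => Qstar (s, a)))
    (M : Matrix (S × A) (S × A) ℝ)
    (hM : M = ∑' k : ℕ,
      ((γ + ε)⁻¹ ^ (2 * k)) • ((polMat γ P πstar ^ k)ᵀ * polMat γ P πstar ^ k)) :
    ∀ Q : S × A → ℝ, Q ≤ Qstar →
      Real.sqrt ((bellman γ P R Q - Qstar) ⬝ᵥ M.mulVec (bellman γ P R Q - Qstar)) ≤
        (γ + ε) * Real.sqrt ((Q - Qstar) ⬝ᵥ M.mulVec (Q - Qstar)) := by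
  intro Q hQ
  have hc0 : 0 < γ + ε := by linarith
  set c := γ + ε with hcdef
  set B := polMat γ P πstar with hBdef
  set f : ℕ → Matrix (S × A) (S × A) ℝ :=
    fun k => (c⁻¹ ^ (2 * k)) • ((B ^ k)ᵀ * B ^ k) with hfdef
  have hf_apply : ∀ (k : ℕ) (p q : S × A),
      f k p q = c⁻¹ ^ (2 * k) * ∑ r : S × A, (B ^ k) r p * (B ^ k) r q := by
    intro k p q
    show (c⁻¹ ^ (2 * k) • ((B ^ k)ᵀ * B ^ k)) p q = _
    simp only [Matrix.smul_apply, smul_eq_mul, Matrix.mul_apply, Matrix.transpose_apply]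
  have hicpos : (0:ℝ) < c⁻¹ := inv_pos.mpr hc0
  have hf_nonneg : ∀ (k : ℕ) (p q : S × A), 0 ≤ f k p q := by
    intro k p q
    rw [hf_apply]
    apply mul_nonneg (pow_nonneg hicpos.le _)
    exact Finset.sum_nonneg fun r _ =>
      mul_nonneg (pow_nonneg_entries hγ0 hP0 πstar k r p) (pow_nonneg_entries hγ0 hP0 πstar k r q)
  have hpowaux : ∀ k : ℕ, γ ^ (2 * k) * c⁻¹ ^ (2 * k) = ((γ / c) ^ 2) ^ k := by
    intro k
    rw [← pow_mul, div_pow, div_eq_mul_inv, inv_pow]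
  have hratio0 : 0 ≤ (γ / c) ^ 2 := sq_nonneg _
  have hratio1 : (γ / c) ^ 2 < 1 := by
    have h1 : γ / c < 1 := (div_lt_one hc0).mpr (by linarith)
    have h2 : 0 ≤ γ / c := div_nonneg hγ0 hc0.le
    nlinarith
  have hf_le : ∀ (k : ℕ) (p q : S × A),
      f k p q ≤ (Fintype.card (S × A) : ℝ) * ((γ / c) ^ 2) ^ k := by
    intro k p q
    rw [hf_apply]
    have hsum : (∑ r : S × A, (B ^ k) r p * (B ^ k) r q)
        ≤ ∑ _r : S × A, γ ^ k * γ ^ k := by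
      apply Finset.sum_le_sum
      intro r _
      exact mul_le_mul (pow_entry_le hγ0 hP0 hP1 πstar k r p)
        (pow_entry_le hγ0 hP0 hP1 πstar k r q)
        (pow_nonneg_entries hγ0 hP0 πstar k r q) (pow_nonneg hγ0 k)
    calc c⁻¹ ^ (2 * k) * ∑ r : S × A, (B ^ k) r p * (B ^ k) r q
        ≤ c⁻¹ ^ (2 * k) * ∑ _r : S × A, γ ^ k * γ ^ k :=
          mul_le_mul_of_nonneg_left hsum (pow_nonneg hicpos.le _)
      _ = (Fintype.card (S × A) : ℝ) * ((γ / c) ^ 2) ^ k := by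
          rw [Finset.sum_const, Finset.card_univ, ← pow_add, nsmul_eq_mul]
          rw [show k + k = 2 * k by ring, ← hpowaux k]
          ring
  have hgeo : Summable (fun k : ℕ => (Fintype.card (S × A) : ℝ) * ((γ / c) ^ 2) ^ k) :=
    (summable_geometric_of_lt_one hratio0 hratio1).mul_left _
  have hfpq : ∀ p q : S × A, Summable fun k => f k p q := by
    intro p q
    exact Summable.of_nonneg_of_le (fun k => hf_nonneg k p q) (fun k => hf_le k p q) hgeo
  have hfsum : Summable f := by
    refine Pi.summable.mpr ?_
    intro p
    rw [Pi.summable]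
    intro q
    exact hfpq p q
  have hMpq : ∀ p q : S × A, M p q = ∑' k, f k p q := by
    intro p q
    rw [hM]
    have h2 : Summable (fun k => f k p) := Pi.summable.mp hfsum p
    calc (∑' k, f k) p q = (∑' k, f k p) q := by exact congrFun (tsum_apply hfsum (x := p)) q
      _ = ∑' k, f k p q := tsum_apply h2
  -- quadratic form representation
  have hdd : ∀ (N' : Matrix (S × A) (S × A) ℝ) (v : S × A → ℝ),
      v ⬝ᵥ N'.mulVec v = ∑ p : S × A, ∑ q : S × A, v p * (N' p q * v q) := by
    intro N' v
    simp [Matrix.mulVec, dotProduct, Finset.mul_sum]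
  have hterm : ∀ (v : S × A → ℝ) (k : ℕ), v ⬝ᵥ (f k).mulVec v
      = c⁻¹ ^ (2 * k) * ((B ^ k).mulVec v ⬝ᵥ (B ^ k).mulVec v) := by
    intro v k
    show v ⬝ᵥ ((c⁻¹ ^ (2 * k)) • ((B ^ k)ᵀ * B ^ k)).mulVec v = _
    rw [Matrix.smul_mulVec, dotProduct_smul, smul_eq_mul]
    congr 1
    rw [← Matrix.mulVec_mulVec, Matrix.dotProduct_mulVec, Matrix.vecMul_transpose]
  have hquad : ∀ v : S × A → ℝ, v ⬝ᵥ M.mulVec v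
      = ∑' k, c⁻¹ ^ (2 * k) * ((B ^ k).mulVec v ⬝ᵥ (B ^ k).mulVec v) := by
    intro v
    have hsumm : ∀ p q : S × A, Summable fun k => v p * (f k p q * v q) := by
      intro p q
      exact ((hfpq p q).mul_right (v q)).mul_left (v p)
    calc v ⬝ᵥ M.mulVec v = ∑ p : S × A, ∑ q : S × A, v p * (M p q * v q) := hdd M v
      _ = ∑ p : S × A, ∑ q : S × A, ∑' k, v p * (f k p q * v q) := by
          refine Finset.sum_congr rfl fun p _ => Finset.sum_congr rfl fun q _ => ?_
          rw [hMpq p q, ← tsum_mul_right, ← tsum_mul_left]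
      _ = ∑ p : S × A, ∑' k, ∑ q : S × A, v p * (f k p q * v q) := by
          refine Finset.sum_congr rfl fun p _ => ?_
          exact (Summable.tsum_finsetSum fun q _ => hsumm p q).symm
      _ = ∑' k, ∑ p : S × A, ∑ q : S × A, v p * (f k p q * v q) := by
          refine (Summable.tsum_finsetSum fun p _ => ?_).symm
          exact summable_sum fun q _ => hsumm p q
      _ = ∑' k, c⁻¹ ^ (2 * k) * ((B ^ k).mulVec v ⬝ᵥ (B ^ k).mulVec v) :=
          tsum_congr fun k => by rw [← hdd (f k) v, hterm]
  -- summability of the scalar series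
  have hgsum : ∀ v : S × A → ℝ,
      Summable (fun k => c⁻¹ ^ (2 * k) * ((B ^ k).mulVec v ⬝ᵥ (B ^ k).mulVec v)) := by
    intro v
    have hsumm : ∀ p q : S × A, Summable fun k => v p * (f k p q * v q) := by
      intro p q
      exact ((hfpq p q).mul_right (v q)).mul_left (v p)
    have : (fun k => c⁻¹ ^ (2 * k) * ((B ^ k).mulVec v ⬝ᵥ (B ^ k).mulVec v))
        = fun k => ∑ p : S × A, ∑ q : S × A, v p * (f k p q * v q) := by
      funext k
      rw [← hdd (f k) v, hterm]
    rw [this]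
    exact summable_sum fun p _ => summable_sum fun q _ => hsumm p q
  have hg0 : ∀ (v : S × A → ℝ) (k : ℕ),
      0 ≤ c⁻¹ ^ (2 * k) * ((B ^ k).mulVec v ⬝ᵥ (B ^ k).mulVec v) := by
    intro v k
    apply mul_nonneg (pow_nonneg hicpos.le _)
    exact Finset.sum_nonneg fun p _ => mul_self_nonneg _
  -- pointwise facts
  have hsup : ∀ s' : S, Finset.univ.sup' Finset.univ_nonempty (fun a' => Q (s', a'))
      ≤ Finset.univ.sup' Finset.univ_nonempty (fun a' => Qstar (s', a')) := by
    intro s'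
    apply Finset.sup'_le
    intro a _
    exact le_trans (hQ (s', a)) (Finset.le_sup' (fun a' => Qstar (s', a')) (Finset.mem_univ a))
  have hy0 : ∀ p : S × A, (bellman γ P R Q - Qstar) p ≤ 0 := by
    intro p
    simp only [Pi.sub_apply, sub_nonpos]
    conv_rhs => rw [← hfix]
    unfold bellman
    apply add_le_add_right
    apply mul_le_mul_of_nonneg_left _ hγ0
    exact Finset.sum_le_sum fun s' _ => mul_le_mul_of_nonneg_left (hsup s') (hP0 _ _ _)
  have hqs : ∀ p : S × A,
      Qstar p = R p.1 p.2 + γ * ∑ s' : S, P p.1 p.2 s' * Qstar (s', πstar s') := by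
    intro p
    conv_lhs => rw [← hfix]
    unfold bellman
    congr 1
    congr 1
    exact Finset.sum_congr rfl fun s' _ => by rw [hgreedy s']
  have hmveq : ∀ v : S × A → ℝ, ∀ p : S × A,
      B.mulVec v p = γ * ∑ s' : S, P p.1 p.2 s' * v (s', πstar s') := by
    intro v p
    simp only [Matrix.mulVec, dotProduct, hBdef, polMat, Matrix.of_apply,
      Fintype.sum_prod_type, ite_mul, zero_mul]
    rw [Finset.mul_sum]
    refine Finset.sum_congr rfl fun s' _ => ?_
    rw [Finset.sum_ite_eq' Finset.univ (πstar s')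
      (fun a' => γ * P p.1 p.2 s' * v (s', a'))]
    simp [mul_assoc]
  have hBx : ∀ p : S × A, B.mulVec (Q - Qstar) p ≤ (bellman γ P R Q - Qstar) p := by
    intro p
    rw [hmveq]
    have h1 : (bellman γ P R Q - Qstar) p = γ * ∑ s' : S, P p.1 p.2 s' *
        (Finset.univ.sup' Finset.univ_nonempty (fun a' => Q (s', a')) - Qstar (s', πstar s')) := by
      simp only [Pi.sub_apply]
      conv_lhs => rw [hqs p]
      unfold bellman
      simp only [mul_sub, Finset.sum_sub_distrib]
      ring
    rw [h1]
    apply mul_le_mul_of_nonneg_left _ hγ0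
    apply Finset.sum_le_sum
    intro s' _
    apply mul_le_mul_of_nonneg_left _ (hP0 _ _ _)
    simp only [Pi.sub_apply]
    apply sub_le_sub_right
    exact Finset.le_sup' (fun a' => Q (s', a')) (Finset.mem_univ (πstar s'))
  have hmono : ∀ (u w : S × A → ℝ), (∀ p, u p ≤ w p) → ∀ (k : ℕ) (p : S × A),
      (B ^ k).mulVec u p ≤ (B ^ k).mulVec w p := by
    intro u w h k p
    simp only [Matrix.mulVec, dotProduct]
    exact Finset.sum_le_sum fun q _ =>
      mul_le_mul_of_nonneg_left (h q) (pow_nonneg_entries hγ0 hP0 πstar k p q)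
  set x : S × A → ℝ := Q - Qstar with hxdef
  set y : S × A → ℝ := bellman γ P R Q - Qstar with hydef
  have hykey : ∀ (k : ℕ) (p : S × A),
      (B ^ (k + 1)).mulVec x p ≤ (B ^ k).mulVec y p ∧ (B ^ k).mulVec y p ≤ 0 := by
    intro k p
    constructor
    · have : (B ^ (k + 1)).mulVec x p = (B ^ k).mulVec (B.mulVec x) p := by
        rw [Matrix.mulVec_mulVec, ← pow_succ]
      rw [this]
      exact hmono _ _ hBx k p
    · have : (B ^ k).mulVec y p ≤ (B ^ k).mulVec 0 p := hmono _ _ hy0 k p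
      simpa using this
  have hsq : ∀ k : ℕ, (B ^ k).mulVec y ⬝ᵥ (B ^ k).mulVec y
      ≤ (B ^ (k + 1)).mulVec x ⬝ᵥ (B ^ (k + 1)).mulVec x := by
    intro k
    apply Finset.sum_le_sum
    intro p _
    obtain ⟨h1, h2⟩ := hykey k p
    nlinarith
  have hcc : ∀ k : ℕ, c ^ 2 * c⁻¹ ^ (2 * (k + 1)) = c⁻¹ ^ (2 * k) := by
    intro k
    have h2 : 2 * (k + 1) = 2 * k + 2 := by ring
    rw [h2, pow_add]
    field_simp
  have hkey : ∀ k : ℕ, c⁻¹ ^ (2 * k) * ((B ^ k).mulVec y ⬝ᵥ (B ^ k).mulVec y)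
      ≤ c ^ 2 * (c⁻¹ ^ (2 * (k + 1)) *
        ((B ^ (k + 1)).mulVec x ⬝ᵥ (B ^ (k + 1)).mulVec x)) := by
    intro k
    rw [← mul_assoc, hcc k]
    exact mul_le_mul_of_nonneg_left (hsq k) (pow_nonneg hicpos.le _)
  -- put it together
  have hshift : Summable (fun k : ℕ => c⁻¹ ^ (2 * (k + 1)) *
      ((B ^ (k + 1)).mulVec x ⬝ᵥ (B ^ (k + 1)).mulVec x)) :=
    (hgsum x).comp_injective (add_left_injective 1)
  have hmain : y ⬝ᵥ M.mulVec y ≤ c ^ 2 * (x ⬝ᵥ M.mulVec x) := by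
    rw [hquad y, hquad x]
    calc (∑' k, c⁻¹ ^ (2 * k) * ((B ^ k).mulVec y ⬝ᵥ (B ^ k).mulVec y))
        ≤ ∑' k, c ^ 2 * (c⁻¹ ^ (2 * (k + 1)) *
            ((B ^ (k + 1)).mulVec x ⬝ᵥ (B ^ (k + 1)).mulVec x)) :=
          Summable.tsum_le_tsum hkey (hgsum y) (hshift.mul_left _)
      _ = c ^ 2 * ∑' k, c⁻¹ ^ (2 * (k + 1)) *
            ((B ^ (k + 1)).mulVec x ⬝ᵥ (B ^ (k + 1)).mulVec x) := tsum_mul_left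
      _ ≤ c ^ 2 * ∑' k, c⁻¹ ^ (2 * k) * ((B ^ k).mulVec x ⬝ᵥ (B ^ k).mulVec x) := by
          apply mul_le_mul_of_nonneg_left _ (sq_nonneg c)
          exact Summable.tsum_le_tsum_of_inj (fun k => k + 1) (add_left_injective 1)
            (fun m _ => hg0 x m) (fun k => le_refl _) hshift (hgsum x)
  have hxnn : 0 ≤ x ⬝ᵥ M.mulVec x := by
    rw [hquad x]
    exact tsum_nonneg (hg0 x)
  have hynn : 0 ≤ y ⬝ᵥ M.mulVec y := by
    rw [hquad y]
    exact tsum_nonneg (hg0 y)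
  calc Real.sqrt (y ⬝ᵥ M.mulVec y) ≤ Real.sqrt (c ^ 2 * (x ⬝ᵥ M.mulVec x)) :=
        Real.sqrt_le_sqrt hmain
    _ = c * Real.sqrt (x ⬝ᵥ M.mulVec x) := by
        rw [Real.sqrt_mul (sq_nonneg c), Real.sqrt_sq hc0.le]
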